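/- Let A₀ be a Dedekind domain with fraction field K₀, M a lattice with dual N, σ^∨ ⊆ M_ℚ a full-dimensional cone dual to a strongly convex cone σ, and A = ⊕_{m ∈ σ^∨ ∩ M} A_m χ^m ⊆ K₀[M] a normal Noetherian M-graded subalgebra over A₀ with weight cone σ^∨, A_m ⊆ K₀, and Frac A = Frac K₀[M]. Then A_m ≠ {0} for every m ∈ σ^∨ ∩ M; that is, the weight monoid of A is all of σ^∨ ∩ M. -/

import Mathlib

open scoped Pointwise

/-- The standard pairing between `M_ℚ` and `N_ℚ`, both identified with `Fin n → ℚ`. -/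
def pairQ {n : ℕ} (m v : Fin n → ℚ) : ℚ := ∑ i, m i * v i

/-- The conical hull (set of nonnegative rational combinations) of a set. -/
def coneHull {n : ℕ} (S : Set (Fin n → ℚ)) : Set (Fin n → ℚ) :=
  {v | ∃ (T : Finset (Fin n → ℚ)) (c : (Fin n → ℚ) → ℚ),
      ↑T ⊆ S ∧ (∀ x ∈ T, 0 ≤ c x) ∧ v = ∑ x ∈ T, c x • x}

/-- A polyhedral cone is the conical hull of a finite set. -/
def IsPolyhedralCone {n : ℕ} (σ : Set (Fin n → ℚ)) : Prop :=
  ∃ S : Finset (Fin n → ℚ), σ = coneHull ↑S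

/-- A cone is strongly convex (pointed) if it contains no line. -/
def IsStronglyConvex {n : ℕ} (σ : Set (Fin n → ℚ)) : Prop :=
  ∀ v ∈ σ, -v ∈ σ → v = 0

/-- The dual cone `σ^∨ ⊆ M_ℚ` of a cone `σ ⊆ N_ℚ`. -/
def dualCone {n : ℕ} (σ : Set (Fin n → ℚ)) : Set (Fin n → ℚ) :=
  {m | ∀ v ∈ σ, 0 ≤ pairQ m v}

/-- A `σ`-polyhedron: Minkowski sum of a (nonempty) polytope with the cone `σ`. -/
def IsSigmaPolyhedron {n : ℕ} (σ Δ : Set (Fin n → ℚ)) : Prop :=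
  ∃ Q : Finset (Fin n → ℚ), Q.Nonempty ∧ Δ = convexHull ℚ ↑Q + σ

/-- Cast a lattice point of `ℤⁿ` into `ℚⁿ`. -/
def castZ {n : ℕ} (m : Fin n → ℤ) : Fin n → ℚ := fun i => (m i : ℚ)

open IsDedekindDomain in
/-- Let `A₀` be a Dedekind domain with fraction field `K₀`, `σ ⊆ N_ℚ` a
strongly convex polyhedral cone with full-dimensional dual `σ^∨`, and
`A = ⊕_{m∈σ^∨∩M} A_m χ^m ⊆ K₀[M]` a normal Noetherian `M`-graded `A₀`-subalgebra with
weight cone `σ^∨` and `Frac A = Frac K₀[M]`. Then `A_m ≠ 0` for every `m ∈ σ^∨ ∩ M`. -/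
theorem stmt7 {n : ℕ}
    (A₀ : Type*) [CommRing A₀] [IsDedekindDomain A₀] (hnf : ¬ IsField A₀)
    (K₀ : Type*) [Field K₀] [Algebra A₀ K₀] [IsFractionRing A₀ K₀]
    (σ : Set (Fin n → ℚ)) (hσpoly : IsPolyhedralCone σ) (hσconv : IsStronglyConvex σ)
    (Am : (Fin n → ℤ) → Submodule A₀ K₀)
    (S : Subalgebra A₀ (AddMonoidAlgebra K₀ (Fin n → ℤ)))
    -- `S` is the `M`-graded subalgebra with pieces `A_m ⊆ K₀`
    (hmem : ∀ f : AddMonoidAlgebra K₀ (Fin n → ℤ), f ∈ S ↔ ∀ m : Fin n → ℤ, f.coeff m ∈ Am m)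
    -- all weights lie in `σ^∨`, and the weights generate the cone `σ^∨`
    (hsupp : ∀ m : Fin n → ℤ, Am m ≠ ⊥ → castZ m ∈ dualCone σ)
    (hgen : dualCone σ ⊆ coneHull {v | ∃ m : Fin n → ℤ, Am m ≠ ⊥ ∧ v = castZ m})
    -- `S` is normal and Noetherian
    (hnormal : IsIntegrallyClosed S) (hnoeth : IsNoetherianRing S)
    -- `S` has the same fraction field as `K₀[M]`
    (hfrac : ∀ f : AddMonoidAlgebra K₀ (Fin n → ℤ), ∃ a b : AddMonoidAlgebra K₀ (Fin n → ℤ),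
      a ∈ S ∧ b ∈ S ∧ b ≠ 0 ∧ f * b = a) :
    ∀ m : Fin n → ℤ, castZ m ∈ dualCone σ → Am m ≠ ⊥ := by
  classical
  intro m hm
  set L := AddMonoidAlgebra K₀ (Fin n → ℤ) with hL
  -- Step 1: clear denominators in the conical combination
  obtain ⟨T, c, hT, hc, hsum⟩ := hgen hm
  choose! mf hmf hcast using fun x (hx : x ∈ (T : Set (Fin n → ℚ))) => hT hx
  set N : ℕ := ∏ x ∈ T, (c x).den with hNdef
  have hNpos : 0 < N := Finset.prod_pos fun x _ => (c x).pos
  -- integer coefficients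
  set k : (Fin n → ℚ) → ℕ := fun x => ((c x).num * ((N : ℤ) / (c x).den)).toNat with hkdef
  have hk : ∀ x ∈ T, ((k x : ℤ) : ℚ) = c x * N := by
    intro x hx
    have hd : ((c x).den : ℤ) ∣ (N : ℤ) := by
      exact_mod_cast Int.natCast_dvd_natCast.mpr (Finset.dvd_prod_of_mem _ hx)
    obtain ⟨t, ht⟩ := hd
    have ht0 : 0 ≤ t := by
      nlinarith [ht, (c x).pos, hNpos, Int.natCast_pos.mpr hNpos, Int.natCast_pos.mpr (c x).pos]
    have hnum : 0 ≤ (c x).num := Rat.num_nonneg.mpr (hc x hx)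
    have hj : (c x).num * ((N : ℤ) / (c x).den) = (c x).num * t := by
      rw [ht, Int.mul_ediv_cancel_left _ (by exact_mod_cast (c x).den_nz : ((c x).den : ℤ) ≠ 0)]
    have hkx : (k x : ℤ) = (c x).num * t := by
      rw [hkdef]; simp only []
      rw [hj, Int.toNat_of_nonneg (mul_nonneg hnum ht0)]
    rw [hkx]
    have h2 : ((N : ℕ) : ℚ) = ((c x).den : ℚ) * (t : ℚ) := by exact_mod_cast ht
    push_cast
    rw [h2]
    have hdq : ((c x).den : ℚ) ≠ 0 := by exact_mod_cast (c x).den_nz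
    have hcd : c x * ((c x).den : ℚ) = ((c x).num : ℚ) := by
      nth_rewrite 1 [show (c x : ℚ) = ((c x).num : ℚ) / ((c x).den : ℚ) from
        (Rat.num_div_den _).symm]
      exact div_mul_cancel₀ _ hdq
    calc ((c x).num : ℚ) * t = c x * ((c x).den : ℚ) * t := by rw [hcd]
      _ = c x * (((c x).den : ℚ) * t) := by ring
  -- N • m = ∑ k x • mf x in the lattice
  have key : (N : ℕ) • m = ∑ x ∈ T, k x • mf x := by
    funext i
    have h1 : (m i : ℚ) = ∑ x ∈ T, c x * x i := by
      have := congrFun hsum i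
      simpa [castZ, smul_eq_mul] using this
    have h2 : (((N • m : Fin n → ℤ) i : ℤ) : ℚ)
        = (((∑ x ∈ T, k x • mf x : Fin n → ℤ) i : ℤ) : ℚ) := by
      simp only [Pi.smul_apply, Finset.sum_apply, nsmul_eq_mul, Pi.mul_apply,
        Pi.natCast_apply]
      push_cast
      rw [h1, Finset.mul_sum]
      refine Finset.sum_congr rfl fun x hx => ?_
      have hxq : x i = ((mf x i : ℤ) : ℚ) := by
        have := congrFun (hcast x hx) i
        simpa [castZ] using this
      have hkq : ((k x : ℕ) : ℚ) = c x * N := by exact_mod_cast hk x hx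
      rw [hxq]
      rw [hkq]
      ring
    exact_mod_cast h2
  -- Step 2: a nonzero element d of Am (N • m)
  choose! a ha1 ha2 using fun x (hx : x ∈ (T : Set (Fin n → ℚ))) =>
    (Submodule.ne_bot_iff _).mp (hmf x hx)
  have hfxS : ∀ x ∈ T, (AddMonoidAlgebra.single (mf x) (a x) : L) ∈ S := by
    intro x hx
    rw [hmem]
    intro m'
    rw [AddMonoidAlgebra.coeff_single_apply]
    split
    · next h => exact h ▸ ha1 x hx
    · exact Submodule.zero_mem _
  set d : K₀ := ∏ x ∈ T, a x ^ k x with hddef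
  have hgS : (AddMonoidAlgebra.single ((N : ℕ) • m) d : L) ∈ S := by
    have : (AddMonoidAlgebra.single ((N : ℕ) • m) d : L)
        = ∏ x ∈ T, (AddMonoidAlgebra.single (mf x) (a x) : L) ^ k x := by
      rw [hddef]
      simp_rw [AddMonoidAlgebra.single_pow]
      rw [AddMonoidAlgebra.prod_single, key]
    rw [this]
    exact Subalgebra.prod_mem S fun x hx => pow_mem (hfxS x hx) _
  have hdmem : d ∈ Am ((N : ℕ) • m) := by
    have := (hmem _).mp hgS ((N : ℕ) • m)
    simpa [Finsupp.single_eq_same] using this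
  have hd0 : d ≠ 0 := by
    rw [hddef]
    exact Finset.prod_ne_zero_iff.mpr fun x hx => pow_ne_zero _ (ha2 x hx)
  -- Step 3: massage d into c₀ with c₀^N ∈ Am (N • m)
  obtain ⟨⟨p, q⟩, hpq⟩ := IsLocalization.surj (nonZeroDivisors A₀) d
  have hq0 : algebraMap A₀ K₀ (q : A₀) ≠ 0 := by
    intro h
    exact nonZeroDivisors.ne_zero q.prop ((IsFractionRing.injective A₀ K₀) (by rw [h, map_zero]))
  set c₀ : K₀ := algebraMap A₀ K₀ p with hc₀def
  have hc₀d : c₀ = d * algebraMap A₀ K₀ (q : A₀) := hpq.symm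
  have hc₀0 : c₀ ≠ 0 := by
    rw [hc₀d]; exact mul_ne_zero hd0 hq0
  have hc₀N : c₀ ^ N ∈ Am ((N : ℕ) • m) := by
    have hN1 : N = (N - 1) + 1 := (Nat.succ_pred_eq_of_pos hNpos).symm
    have : c₀ ^ N = (p ^ (N - 1) * (q : A₀)) • d := by
      rw [Algebra.smul_def, map_mul, map_pow]
      calc c₀ ^ N = c₀ ^ (N - 1) * c₀ := by conv_lhs => rw [hN1, pow_succ]
        _ = c₀ ^ (N - 1) * (d * algebraMap A₀ K₀ (q : A₀)) := by rw [← hc₀d]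
        _ = algebraMap A₀ K₀ p ^ (N - 1) * algebraMap A₀ K₀ (q : A₀) * d := by
            rw [hc₀def]; ring
    rw [this]
    exact Submodule.smul_mem _ _ hdmem
  -- Step 4: the monomial x = χ^m · c₀ has its N-th power in S
  set x : L := AddMonoidAlgebra.single m c₀ with hxdef
  have hxN : x ^ N ∈ S := by
    rw [hxdef, AddMonoidAlgebra.single_pow, hmem]
    intro m'
    rw [AddMonoidAlgebra.coeff_single_apply]
    split
    · next h => exact h ▸ hc₀N
    · exact Submodule.zero_mem _
  -- Step 5: the fraction field of L is a fraction field of S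
  letI : IsDomain L := NoZeroDivisors.to_isDomain _
  letI : NoZeroDivisors S := by
    refine ⟨?_⟩
    intro a b hab
    have : (a : L) * (b : L) = 0 := by
      simpa using congrArg Subtype.val hab
    rcases mul_eq_zero.mp this with h | h
    · exact Or.inl (Subtype.ext h)
    · exact Or.inr (Subtype.ext h)
  haveI : Nontrivial S := ⟨⟨0, 1, fun h => by
    have : (0 : L) = 1 := by simpa using congrArg Subtype.val h
    exact zero_ne_one this⟩⟩
  letI : IsDomain S := NoZeroDivisors.to_isDomain _
  set F := FractionRing L with hFdef
  letI : Algebra S F := ((algebraMap L F).comp (algebraMap S L)).toAlgebra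
  have halg : ∀ s : S, algebraMap S F s = algebraMap L F (s : L) := fun s => rfl
  have hLF : Function.Injective (algebraMap L F) := IsFractionRing.injective L F
  haveI : IsFractionRing S F := by
    refine ⟨?_, ?_, ?_⟩
    · rintro ⟨y, hy⟩
      have hy0 : (y : L) ≠ 0 := fun h => nonZeroDivisors.ne_zero hy (Subtype.ext h)
      refine isUnit_iff_ne_zero.mpr ?_
      rw [halg]
      intro h
      exact hy0 (hLF (by rw [h, map_zero]))
    · intro z
      obtain ⟨⟨pz, qz⟩, hz⟩ := IsLocalization.surj (nonZeroDivisors L) z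
      obtain ⟨ap, bp, hapS, hbpS, hbp0, hp⟩ := hfrac pz
      obtain ⟨aq, bq, haqS, hbqS, hbq0, hq⟩ := hfrac (qz : L)
      have hqz0 : (qz : L) ≠ 0 := nonZeroDivisors.ne_zero qz.prop
      have haq0 : aq ≠ 0 := by
        rw [← hq]; exact mul_ne_zero hqz0 hbq0
      have hden0 : aq * bp ≠ 0 := mul_ne_zero haq0 hbp0
      refine ⟨⟨⟨ap * bq, mul_mem hapS hbqS⟩,
        ⟨⟨aq * bp, mul_mem haqS hbpS⟩, mem_nonZeroDivisors_of_ne_zero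
          (fun h => hden0 (by simpa using congrArg Subtype.val h))⟩⟩, ?_⟩
      show z * algebraMap L F (aq * bp) = algebraMap L F (ap * bq)
      rw [map_mul, map_mul, ← mul_assoc]
      calc z * algebraMap L F aq * algebraMap L F bp
          = z * algebraMap L F ((qz : L) * bq) * algebraMap L F bp := by rw [hq]
        _ = (z * algebraMap L F (qz : L)) * algebraMap L F bq * algebraMap L F bp := by
            rw [map_mul]; ring
        _ = algebraMap L F pz * algebraMap L F bq * algebraMap L F bp := by rw [hz]
        _ = algebraMap L F (pz * bp) * algebraMap L F bq := by rw [map_mul]; ring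
        _ = algebraMap L F ap * algebraMap L F bq := by rw [hp]
    · intro y z h
      rw [halg, halg] at h
      exact ⟨1, by rw [Subtype.ext (hLF h)]⟩
  -- Step 6: x is integral over S, hence in S by normality
  set sN : S := ⟨x ^ N, hxN⟩ with hsNdef
  have hint : IsIntegral S (algebraMap L F x) := by
    refine ⟨Polynomial.X ^ N - Polynomial.C sN, Polynomial.monic_X_pow_sub_C sN hNpos.ne', ?_⟩
    simp only [Polynomial.eval₂_sub, Polynomial.eval₂_pow, Polynomial.eval₂_X,
      Polynomial.eval₂_C]
    rw [show ((algebraMap S F) sN : F) = algebraMap L F (x ^ N) from rfl, map_pow]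
    ring
  obtain ⟨y, hy⟩ := (isIntegrallyClosed_iff F).mp hnormal hint
  have hyx : (y : L) = x := hLF (by rw [← halg, hy])
  have hxS : x ∈ S := hyx ▸ y.2
  have hcm : c₀ ∈ Am m := by
    have := (hmem _).mp hxS m
    simpa [hxdef, Finsupp.single_eq_same] using this
  intro hbot
  rw [hbot] at hcm
  exact hc₀0 (Submodule.mem_bot A₀ |>.mp hcm)
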